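/- For any fixed subset A* of {2,4,...,2k}, the sum over all balanced partitions (A,B) of {1,2,...,2k} with A ∩ {2,4,...,2k} = A* of (∏_{1≤i<j≤k} (a_j-a_i)/(j-i)) · (∏_{1≤i<j≤k} (b_j-b_i)/(j-i)) equals 2^{k(k-1)}, independent of the choice of A*. -/

import Mathlib

open Finset

/-- The weight of a `k`-element set `S = {s₁ < ... < s_k}` of integers:
`∏_{1 ≤ i < j ≤ k} (s_j - s_i)/(j - i)` (and `0` if `S.card ≠ k`). -/
noncomputable def wt (k : ℕ) (S : Finset ℕ) : ℚ :=
  if h : S.card = k then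
    ∏ p ∈ Finset.univ.filter (fun p : Fin k × Fin k => p.1 < p.2),
      (((S.orderEmbOfFin h p.2 : ℕ) : ℚ) - ((S.orderEmbOfFin h p.1 : ℕ) : ℚ)) /
        (((p.2 : ℕ) : ℚ) - ((p.1 : ℕ) : ℚ))
  else 0

namespace BalancedAux

open Matrix Equiv

/-! ### Pair set and basic products -/

/-- The set of ordered pairs `i < j` in `Fin k × Fin k`. -/
def Pr (k : ℕ) : Finset (Fin k × Fin k) :=
  Finset.univ.filter (fun p : Fin k × Fin k => p.1 < p.2)

/-- The superfactorial-type denominator `∏_{i<j} (j - i)`. -/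
noncomputable def Dk (k : ℕ) : ℚ :=
  ∏ p ∈ Pr k, (((p.2 : ℕ) : ℚ) - ((p.1 : ℕ) : ℚ))

lemma prod_pairs {k : ℕ} (f : Fin k → Fin k → ℚ) :
    ∏ p ∈ Pr k, f p.1 p.2 = ∏ i : Fin k, ∏ j ∈ Finset.Ioi i, f i j := by
  rw [Finset.prod_sigma']
  refine Finset.prod_nbij' (fun p => ⟨p.1, p.2⟩) (fun p => (p.1, p.2)) ?_ ?_ ?_ ?_ ?_ <;>
    simp [Pr, Finset.mem_sigma]

lemma Dk_pos (k : ℕ) : 0 < Dk k := by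
  apply Finset.prod_pos
  intro p hp
  simp only [Pr, Finset.mem_filter] at hp
  have h : (p.1 : ℕ) < (p.2 : ℕ) := hp.2
  have h2 : ((p.1 : ℕ) : ℚ) < ((p.2 : ℕ) : ℚ) := by exact_mod_cast h
  linarith

lemma det_vandermonde_pr {k : ℕ} (v : Fin k → ℚ) :
    (Matrix.vandermonde v).det = ∏ p ∈ Pr k, (v p.2 - v p.1) := by
  rw [Matrix.det_vandermonde]
  exact (prod_pairs _).symm

lemma card_pr_two (k : ℕ) : (Pr k).card * 2 = k * (k - 1) := by
  have h : (Pr k).card = ∑ i : Fin k, (Finset.Ioi i).card := by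
    rw [← Finset.card_sigma]
    apply Finset.card_nbij' (fun p => ⟨p.1, p.2⟩) (fun p => (p.1, p.2)) <;>
      simp [Pr, Finset.mem_sigma, Set.MapsTo, Set.LeftInvOn, Set.RightInvOn]
  rw [h]
  have h2 : ∑ i : Fin k, (Finset.Ioi i).card = ∑ i ∈ Finset.range k, (k - 1 - i) := by
    rw [Finset.sum_range fun i => k - 1 - i]
    exact Finset.sum_congr rfl fun i _ => Fin.card_Ioi i
  rw [h2]
  have h3 : ∑ i ∈ Finset.range k, (k - 1 - i) = ∑ i ∈ Finset.range k, i := by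
    rw [← Finset.sum_range_reflect]
    apply Finset.sum_congr rfl
    intro i hi
    simp only [Finset.mem_range] at hi
    omega
  rw [h3, Finset.sum_range_id_mul_two]

/-! ### wt basics -/

lemma wt_eq_prod_div {k : ℕ} {A : Finset ℕ} (h : A.card = k) :
    wt k A = (∏ p ∈ Pr k,
      (((A.orderEmbOfFin h p.2 : ℕ) : ℚ) - ((A.orderEmbOfFin h p.1 : ℕ) : ℚ))) / Dk k := by
  rw [wt, dif_pos h, Dk, ← Finset.prod_div_distrib]
  rfl

lemma wt_mul_Dk {k : ℕ} {A : Finset ℕ} (h : A.card = k) :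
    wt k A * Dk k = ∏ p ∈ Pr k,
      (((A.orderEmbOfFin h p.2 : ℕ) : ℚ) - ((A.orderEmbOfFin h p.1 : ℕ) : ℚ)) := by
  rw [wt_eq_prod_div h, div_mul_cancel₀]
  exact ne_of_gt (Dk_pos k)

lemma wt_pos {k : ℕ} {A : Finset ℕ} (h : A.card = k) : 0 < wt k A := by
  rw [wt_eq_prod_div h]
  apply div_pos _ (Dk_pos k)
  apply Finset.prod_pos
  intro p hp
  simp only [Pr, Finset.mem_filter] at hp
  have h1 := (A.orderEmbOfFin h).strictMono hp.2
  have h2 : ((A.orderEmbOfFin h p.1 : ℕ) : ℚ) < ((A.orderEmbOfFin h p.2 : ℕ) : ℚ) := by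
    exact_mod_cast h1
  linarith

/-! ### The matrices -/

variable (k : ℕ) (As : Finset ℕ)

/-- top weight of column `c` (representing the number `c+1`). -/
def wTop (c : Fin (2 * k)) : ℚ :=
  if Even ((c : ℕ) + 1) then (if (c : ℕ) + 1 ∈ As then 1 else 0) else 1

/-- bottom weight of column `c`. -/
def wBot (c : Fin (2 * k)) : ℚ :=
  if Even ((c : ℕ) + 1) then (if (c : ℕ) + 1 ∈ As then 0 else 1) else 1

/-- the `b`-part of column `c`, as a vector indexed by rows `Fin k ⊕ Fin k`. -/
def part (b : Bool) (c : Fin (2 * k)) : Fin k ⊕ Fin k → ℚ :=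
  fun r => match r with
  | .inl s => if b then wTop k As c * (((c : ℕ) + 1 : ℕ) : ℚ) ^ (s : ℕ) else 0
  | .inr s => if b then 0 else wBot k As c * (((c : ℕ) + 1 : ℕ) : ℚ) ^ (s : ℕ)

/-- identification of rows with `Fin (2k)`. -/
def ρ : Fin (2 * k) ≃ Fin k ⊕ Fin k where
  toFun r := if h : (r : ℕ) < k then .inl ⟨r, h⟩ else .inr ⟨(r : ℕ) - k, by omega⟩
  invFun x := match x with
    | .inl s => ⟨s, by omega⟩
    | .inr s => ⟨k + s, by omega⟩
  left_inv r := by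
    by_cases h : (r : ℕ) < k
    · simp only [dif_pos h]
    · simp only [dif_neg h]
      apply Fin.ext
      simp only []
      omega
  right_inv x := by
    rcases x with s | s
    · simp only [dif_pos s.isLt]
    · have h : ¬ ((k + (s : ℕ)) < k) := by omega
      simp only [dif_neg h]
      congr 1
      apply Fin.ext
      simp only []
      omega

/-- identification of columns with `Fin (2k)` grouping parities. -/
def κ : (Fin k ⊕ Fin k) ≃ Fin (2 * k) where
  toFun x := match x with
    | .inl i => ⟨2 * i, by omega⟩
    | .inr i => ⟨2 * i + 1, by omega⟩
  invFun c := if h : (c : ℕ) % 2 = 0 then .inl ⟨(c : ℕ) / 2, by omega⟩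
    else .inr ⟨(c : ℕ) / 2, by omega⟩
  left_inv x := by
    rcases x with i | i
    · have h : (2 * (i : ℕ)) % 2 = 0 := by omega
      simp only [h, dif_pos]
      congr 1
      apply Fin.ext
      simp only []
      omega
    · have h : ¬ ((2 * (i : ℕ) + 1) % 2 = 0) := by omega
      simp only [dif_neg h]
      congr 1
      apply Fin.ext
      simp only []
      omega
  right_inv c := by
    by_cases h : (c : ℕ) % 2 = 0
    · simp only [dif_pos h]
      apply Fin.ext
      simp only []
      omega
    · simp only [dif_neg h]
      apply Fin.ext
      simp only []
      omega

/-- the matrix attached to a choice function `f`. -/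
def Zf (f : Fin (2 * k) → Bool) : Matrix (Fin (2 * k)) (Fin (2 * k)) ℚ :=
  fun r c => part k As (f c) c (ρ k r)

/-- the full matrix. -/
def Zsq : Matrix (Fin (2 * k)) (Fin (2 * k)) ℚ :=
  fun r c => part k As true c (ρ k r) + part k As false c (ρ k r)

lemma det_Zsq_expand : (Zsq k As).det = ∑ f : Fin (2 * k) → Bool, (Zf k As f).det := by
  rw [← Matrix.det_transpose]
  have h1 : (Zsq k As)ᵀ = fun c => ∑ b : Bool, (fun r => part k As b c (ρ k r)) := by
    funext c r
    rw [Finset.sum_apply]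
    rw [Fintype.sum_bool]
    rfl
  rw [h1]
  have h2 := (Matrix.detRowAlternating (R := ℚ)
      (n := Fin (2 * k))).toMultilinearMap.map_sum
      (g := fun c (b : Bool) => (fun r => part k As b c (ρ k r)))
  simp only [AlternatingMap.coe_multilinearMap] at h2
  rw [show (Matrix.det (fun c => ∑ b : Bool, fun r => part k As b c (ρ k r))) =
      Matrix.detRowAlternating (fun c => ∑ b : Bool, fun r => part k As b c (ρ k r)) from rfl]
  rw [h2]
  apply Finset.sum_congr rfl
  intro f _
  rw [← Matrix.det_transpose (Zf k As f)]
  rfl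

lemma card_left (hk : 0 < k) :
    (Finset.univ.filter (fun r : Fin (2 * k) => (ρ k r).isLeft = true)).card = k := by
  have hb : k < 2 * k := by omega
  have h : (Finset.univ.filter (fun r : Fin (2 * k) => (ρ k r).isLeft = true)) =
      Finset.Iio (⟨k, hb⟩ : Fin (2 * k)) := by
    ext r
    simp only [Finset.mem_filter, Finset.mem_univ, true_and, Finset.mem_Iio]
    by_cases h : (r : ℕ) < k
    · simp [ρ, h, Fin.lt_def]
    · simp [ρ, h, Fin.lt_def]
  rw [h, Fin.card_Iio]

lemma card_right (hk : 0 < k) :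
    (Finset.univ.filter (fun r : Fin (2 * k) => (ρ k r).isRight = true)).card = k := by
  have h1 := Finset.card_filter_add_card_filter_not
    (s := (Finset.univ : Finset (Fin (2 * k)))) (fun r => (ρ k r).isLeft = true)
  have he : (Finset.univ.filter (fun r : Fin (2 * k) => ¬ ((ρ k r).isLeft = true))) =
      (Finset.univ.filter (fun r : Fin (2 * k) => (ρ k r).isRight = true)) := by
    apply Finset.filter_congr
    intro r _
    rcases h : ρ k r with s | s <;> simp
  rw [he, card_left k hk] at h1
  have h2 : (Finset.univ : Finset (Fin (2 * k))).card = 2 * k := by simp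
  omega

lemma prod_Zf_eq_zero {f : Fin (2 * k) → Bool} {σ : Equiv.Perm (Fin (2 * k))}
    (c : Fin (2 * k)) (h : (Zf k As f) (σ c) c = 0) :
    ∏ i, (Zf k As f) (σ i) i = 0 :=
  Finset.prod_eq_zero (Finset.mem_univ c) h

/-- compatibility of a choice function with `As`. -/
def Compat (f : Fin (2 * k) → Bool) : Prop :=
  ∀ c : Fin (2 * k), Even ((c : ℕ) + 1) → (f c = true ↔ (c : ℕ) + 1 ∈ As)

instance : DecidablePred (Compat k As) := fun _ => by
  unfold Compat; infer_instance

/-- the good choice functions. -/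
def goodF : Finset (Fin (2 * k) → Bool) :=
  Finset.univ.filter (fun f => Compat k As f ∧
    (Finset.univ.filter (fun c => f c = true)).card = k)

lemma det_Zf_zero_of_incompat (f : Fin (2 * k) → Bool) (h : ¬ Compat k As f) :
    (Zf k As f).det = 0 := by
  rw [Compat] at h
  push_neg at h
  obtain ⟨c, hc, hcase⟩ := h
  apply Matrix.det_eq_zero_of_column_eq_zero c
  intro r
  rw [Zf]
  rcases hr : ρ k r with s | s <;>
    rcases hcase with ⟨hfc, hmem⟩ | ⟨hfc, hmem⟩
  · simp [hr, part, hfc, wTop, hc, hmem]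
  · have hfc' : f c = false := by simpa using hfc
    simp [hr, part, hfc']
  · simp [hr, part, hfc]
  · have hfc' : f c = false := by simpa using hfc
    simp [hr, part, hfc', wBot, hc, hmem]

lemma det_Zf_zero_of_card (hk : 0 < k) (f : Fin (2 * k) → Bool)
    (h : (Finset.univ.filter (fun c => f c = true)).card ≠ k) :
    (Zf k As f).det = 0 := by
  rw [Matrix.det_apply]
  apply Finset.sum_eq_zero
  intro σ _
  have hz : ∏ i, (Zf k As f) (σ i) i = 0 := by
    rcases lt_or_gt_of_ne h with hlt | hgt
    · -- fewer than k "true" columns: more than k "false" columns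
      have hcards := Finset.card_filter_add_card_filter_not
        (s := (Finset.univ : Finset (Fin (2 * k)))) (fun c => f c = true)
      have hcard2 : (Finset.univ : Finset (Fin (2 * k))).card = 2 * k := by simp
      set T := Finset.univ.filter (fun c : Fin (2 * k) => ¬ (f c = true)) with hT
      have hTcard : T.card > k := by omega
      have hnotall : ¬ (∀ c ∈ T, (ρ k (σ c)).isRight = true) := by
        intro hall
        have hsub : T.image σ ⊆ Finset.univ.filter
            (fun r : Fin (2 * k) => (ρ k r).isRight = true) := by
          intro x hx
          obtain ⟨c, hc, rfl⟩ := Finset.mem_image.mp hx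
          exact Finset.mem_filter.mpr ⟨Finset.mem_univ _, hall c hc⟩
        have h1 : (T.image σ).card = T.card := Finset.card_image_of_injective _ σ.injective
        have h2 := Finset.card_le_card hsub
        rw [h1, card_right k hk] at h2
        omega
      push_neg at hnotall
      obtain ⟨c, hcT, hcL⟩ := hnotall
      refine prod_Zf_eq_zero k As c ?_
      show part k As (f c) c (ρ k (σ c)) = 0
      rcases hrr : ρ k (σ c) with s | s
      · have hfc : f c = false := by
          have := Finset.mem_filter.mp hcT
          simpa using this.2
        simp [hfc, part]
      · rw [hrr] at hcL; simp at hcL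
    · set S := Finset.univ.filter (fun c : Fin (2 * k) => f c = true) with hS
      have hnotall : ¬ (∀ c ∈ S, (ρ k (σ c)).isLeft = true) := by
        intro hall
        have hsub : S.image σ ⊆ Finset.univ.filter
            (fun r : Fin (2 * k) => (ρ k r).isLeft = true) := by
          intro x hx
          obtain ⟨c, hc, rfl⟩ := Finset.mem_image.mp hx
          exact Finset.mem_filter.mpr ⟨Finset.mem_univ _, hall c hc⟩
        have h1 : (S.image σ).card = S.card := Finset.card_image_of_injective _ σ.injective
        have h2 := Finset.card_le_card hsub
        rw [h1, card_left k hk] at h2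
        omega
      push_neg at hnotall
      obtain ⟨c, hcS, hcL⟩ := hnotall
      refine prod_Zf_eq_zero k As c ?_
      show part k As (f c) c (ρ k (σ c)) = 0
      rcases hrr : ρ k (σ c) with s | s
      · rw [hrr] at hcL; simp at hcL
      · have hfc : f c = true := by
          have := Finset.mem_filter.mp hcS
          simpa using this.2
        simp [hfc, part]
  rw [hz, smul_zero]

/-! ### good `f`: factorization of the determinant -/

/-- the "true" columns. -/
def Sof (f : Fin (2 * k) → Bool) : Finset (Fin (2 * k)) :=
  Finset.univ.filter (fun c => f c = true)

/-- the "false" columns. -/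
def Tof (f : Fin (2 * k) → Bool) : Finset (Fin (2 * k)) :=
  Finset.univ.filter (fun c => f c = false)

/-- embedding of column indices into the numbers `1,…,2k`. -/
def emb2 : Fin (2 * k) ↪ ℕ :=
  ⟨fun c => (c : ℕ) + 1, show Function.Injective (fun c : Fin (2 * k) => (c : ℕ) + 1) from
    fun a b hab => by
    apply Fin.ext; simpa using hab⟩

/-- the subset of `{1,…,2k}` attached to `f`. -/
def Aof (f : Fin (2 * k) → Bool) : Finset ℕ := (Sof k f).map (emb2 k)

/-- the complementary subset attached to `f`. -/
def Bof (f : Fin (2 * k) → Bool) : Finset ℕ := (Tof k f).map (emb2 k)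

lemma Tof_card {f : Fin (2 * k) → Bool} (hS : (Sof k f).card = k) :
    (Tof k f).card = k := by
  have h1 := Finset.card_filter_add_card_filter_not
    (s := (Finset.univ : Finset (Fin (2 * k)))) (fun c => f c = true)
  have he : (Finset.univ.filter (fun c : Fin (2 * k) => ¬ (f c = true))) = Tof k f := by
    apply Finset.filter_congr
    intro c _
    simp
  rw [he] at h1
  rw [Sof] at hS
  have h2 : (Finset.univ : Finset (Fin (2 * k))).card = 2 * k := by simp
  omega

lemma psi_bijective {f : Fin (2 * k) → Bool} (hS : (Sof k f).card = k)
    (hT : (Tof k f).card = k) :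
    Function.Bijective (Sum.elim ((Sof k f).orderEmbOfFin hS) ((Tof k f).orderEmbOfFin hT)) := by
  rw [Fintype.bijective_iff_injective_and_card]
  constructor
  · intro a b hab
    rcases a with i | i <;> rcases b with j | j <;> simp only [Sum.elim_inl, Sum.elim_inr] at hab
    · rw [(Finset.orderEmbOfFin _ _).injective hab]
    · exfalso
      have h1 := ((Finset.mem_filter.mp ((Sof k f).orderEmbOfFin_mem hS i))).2
      have h2 := ((Finset.mem_filter.mp ((Tof k f).orderEmbOfFin_mem hT j))).2
      rw [hab, h2] at h1
      exact absurd h1 (by simp)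
    · exfalso
      have h1 := ((Finset.mem_filter.mp ((Sof k f).orderEmbOfFin_mem hS j))).2
      have h2 := ((Finset.mem_filter.mp ((Tof k f).orderEmbOfFin_mem hT i))).2
      rw [← hab, h2] at h1
      exact absurd h1 (by simp)
    · rw [(Finset.orderEmbOfFin _ _).injective hab]
  · simp
    omega

/-- the column equivalence sorting the columns of `Zf` into blocks. -/
noncomputable def ψ {f : Fin (2 * k) → Bool} (hS : (Sof k f).card = k)
    (hT : (Tof k f).card = k) : (Fin k ⊕ Fin k) ≃ Fin (2 * k) :=
  Equiv.ofBijective _ (psi_bijective k hS hT)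

lemma psi_inl {f : Fin (2 * k) → Bool} (hS : (Sof k f).card = k)
    (hT : (Tof k f).card = k) (j : Fin k) :
    ψ k hS hT (.inl j) = (Sof k f).orderEmbOfFin hS j := rfl

lemma psi_inr {f : Fin (2 * k) → Bool} (hS : (Sof k f).card = k)
    (hT : (Tof k f).card = k) (j : Fin k) :
    ψ k hS hT (.inr j) = (Tof k f).orderEmbOfFin hT j := rfl

/-- the unshuffle permutation attached to `f`. -/
noncomputable def uS {f : Fin (2 * k) → Bool} (hS : (Sof k f).card = k)
    (hT : (Tof k f).card = k) : Equiv.Perm (Fin (2 * k)) :=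
  (ρ k).trans (ψ k hS hT)

lemma Aof_card {f : Fin (2 * k) → Bool} (hS : (Sof k f).card = k) :
    (Aof k f).card = k := by rw [Aof, Finset.card_map, hS]

lemma Bof_card {f : Fin (2 * k) → Bool} (hT : (Tof k f).card = k) :
    (Bof k f).card = k := by rw [Bof, Finset.card_map, hT]

lemma Aof_orderEmbOfFin {f : Fin (2 * k) → Bool} (hS : (Sof k f).card = k) (j : Fin k) :
    ((Aof k f).orderEmbOfFin (Aof_card k hS) j : ℕ)
      = ((Sof k f).orderEmbOfFin hS j : ℕ) + 1 := by
  have h : (fun j : Fin k => (((Sof k f).orderEmbOfFin hS j : ℕ) + 1))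
      = (Aof k f).orderEmbOfFin (Aof_card k hS) := by
    apply Finset.orderEmbOfFin_unique
    · intro x
      rw [Aof, Finset.mem_map]
      exact ⟨(Sof k f).orderEmbOfFin hS x, (Sof k f).orderEmbOfFin_mem hS x, rfl⟩
    · intro a b hab
      have := ((Sof k f).orderEmbOfFin hS).strictMono hab
      simp only []
      omega
  rw [← h]

lemma Bof_orderEmbOfFin {f : Fin (2 * k) → Bool} (hT : (Tof k f).card = k) (j : Fin k) :
    ((Bof k f).orderEmbOfFin (Bof_card k hT) j : ℕ)
      = ((Tof k f).orderEmbOfFin hT j : ℕ) + 1 := by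
  have h : (fun j : Fin k => (((Tof k f).orderEmbOfFin hT j : ℕ) + 1))
      = (Bof k f).orderEmbOfFin (Bof_card k hT) := by
    apply Finset.orderEmbOfFin_unique
    · intro x
      rw [Bof, Finset.mem_map]
      exact ⟨(Tof k f).orderEmbOfFin hT x, (Tof k f).orderEmbOfFin_mem hT x, rfl⟩
    · intro a b hab
      have := ((Tof k f).orderEmbOfFin hT).strictMono hab
      simp only []
      omega
  rw [← h]

lemma wTop_one {c : Fin (2 * k)} (h : Even ((c : ℕ) + 1) → (c : ℕ) + 1 ∈ As) :
    wTop k As c = 1 := by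
  rw [wTop]
  by_cases he : Even ((c : ℕ) + 1)
  · simp [he, h he]
  · simp [he]

lemma wBot_one {c : Fin (2 * k)} (h : Even ((c : ℕ) + 1) → (c : ℕ) + 1 ∉ As) :
    wBot k As c = 1 := by
  rw [wBot]
  by_cases he : Even ((c : ℕ) + 1)
  · simp [he, h he]
  · simp [he]

lemma det_Zf_good {f : Fin (2 * k) → Bool} (hcompat : Compat k As f)
    (hS : (Sof k f).card = k) (hT : (Tof k f).card = k) :
    (Zf k As f).det = ((Equiv.Perm.sign (uS k hS hT) : ℤ) : ℚ) *
      ((wt k (Aof k f) * Dk k) * (wt k (Bof k f) * Dk k)) := by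
  have hfS : ∀ j : Fin k, f ((Sof k f).orderEmbOfFin hS j) = true := fun j =>
    (Finset.mem_filter.mp ((Sof k f).orderEmbOfFin_mem hS j)).2
  have hfT : ∀ j : Fin k, f ((Tof k f).orderEmbOfFin hT j) = false := fun j =>
    (Finset.mem_filter.mp ((Tof k f).orderEmbOfFin_mem hT j)).2
  set Tm : Matrix (Fin k) (Fin k) ℚ :=
    fun s j => (((((Sof k f).orderEmbOfFin hS j : Fin (2 * k)) : ℕ) + 1 : ℕ) : ℚ) ^ (s : ℕ)
    with hTmdef
  set Bm : Matrix (Fin k) (Fin k) ℚ :=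
    fun s j => (((((Tof k f).orderEmbOfFin hT j : Fin (2 * k)) : ℕ) + 1 : ℕ) : ℚ) ^ (s : ℕ)
    with hBmdef
  have hMf : (Zf k As f).submatrix (⇑(ρ k).symm) (⇑(ψ k hS hT))
      = Matrix.fromBlocks Tm 0 0 Bm := by
    ext r c
    rcases r with s | s <;> rcases c with j | j
    · show part k As (f (ψ k hS hT (Sum.inl j))) (ψ k hS hT (Sum.inl j))
        (ρ k ((ρ k).symm (Sum.inl s))) = Tm s j
      rw [Equiv.apply_symm_apply, psi_inl, hfS j]
      have h1 : wTop k As ((Sof k f).orderEmbOfFin hS j) = 1 := by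
        apply wTop_one
        intro he
        exact (hcompat _ he).mp (hfS j)
      simp [part, h1, hTmdef]
    · show part k As (f (ψ k hS hT (Sum.inr j))) (ψ k hS hT (Sum.inr j))
        (ρ k ((ρ k).symm (Sum.inl s))) = (0 : Matrix (Fin k) (Fin k) ℚ) s j
      rw [Equiv.apply_symm_apply, psi_inr, hfT j]
      simp [part]
    · show part k As (f (ψ k hS hT (Sum.inl j))) (ψ k hS hT (Sum.inl j))
        (ρ k ((ρ k).symm (Sum.inr s))) = (0 : Matrix (Fin k) (Fin k) ℚ) s j
      rw [Equiv.apply_symm_apply, psi_inl, hfS j]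
      simp [part]
    · show part k As (f (ψ k hS hT (Sum.inr j))) (ψ k hS hT (Sum.inr j))
        (ρ k ((ρ k).symm (Sum.inr s))) = Bm s j
      rw [Equiv.apply_symm_apply, psi_inr, hfT j]
      have h1 : wBot k As ((Tof k f).orderEmbOfFin hT j) = 1 := by
        apply wBot_one
        intro he hmem
        have := (hcompat _ he).mpr hmem
        rw [hfT j] at this
        exact absurd this (by simp)
      simp [part, h1, hBmdef]
  set σS : Equiv.Perm (Fin k ⊕ Fin k) := (ψ k hS hT).trans (ρ k) with hσS
  have hperm : (Zf k As f).submatrix (⇑(ρ k).symm) (⇑(ψ k hS hT))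
      = ((Zf k As f).submatrix (⇑(ρ k).symm) (⇑(ρ k).symm)).submatrix id (⇑σS) := by
    ext r c
    simp [Matrix.submatrix_apply, hσS, Equiv.symm_apply_apply]
  have hdet1 : Tm.det * Bm.det = ((Equiv.Perm.sign σS : ℤ) : ℚ) * (Zf k As f).det := by
    rw [← Matrix.det_fromBlocks_zero₂₁ Tm 0 Bm, ← hMf, hperm, Matrix.det_permute',
      Matrix.det_submatrix_equiv_self]
  have hsgn : Equiv.Perm.sign (uS k hS hT) = Equiv.Perm.sign σS := by
    have he : uS k hS hT = (((ρ k).symm.symm.trans σS).trans (ρ k).symm) := by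
      ext x
      simp [uS, hσS, Equiv.symm_apply_apply]
    rw [he]
    exact Equiv.Perm.sign_symm_trans_trans σS (ρ k).symm
  have hTmdet : Tm.det = wt k (Aof k f) * Dk k := by
    have h1 : Tm = (Matrix.vandermonde
        (fun j => (((((Sof k f).orderEmbOfFin hS j : Fin (2 * k)) : ℕ) + 1 : ℕ) : ℚ)))ᵀ := by
      ext s j
      simp [Matrix.vandermonde, Matrix.transpose_apply, hTmdef]
    rw [h1, Matrix.det_transpose, det_vandermonde_pr, wt_mul_Dk (Aof_card k hS)]
    apply Finset.prod_congr rfl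
    intro p _
    rw [Aof_orderEmbOfFin k hS p.2, Aof_orderEmbOfFin k hS p.1]
  have hBmdet : Bm.det = wt k (Bof k f) * Dk k := by
    have h1 : Bm = (Matrix.vandermonde
        (fun j => (((((Tof k f).orderEmbOfFin hT j : Fin (2 * k)) : ℕ) + 1 : ℕ) : ℚ)))ᵀ := by
      ext s j
      simp [Matrix.vandermonde, Matrix.transpose_apply, hBmdef]
    rw [h1, Matrix.det_transpose, det_vandermonde_pr, wt_mul_Dk (Bof_card k hT)]
    apply Finset.prod_congr rfl
    intro p _
    rw [Bof_orderEmbOfFin k hT p.2, Bof_orderEmbOfFin k hT p.1]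
  have hunit : ((Equiv.Perm.sign σS : ℤ) : ℚ) * ((Equiv.Perm.sign σS : ℤ) : ℚ) = 1 := by
    rcases Int.units_eq_one_or (Equiv.Perm.sign σS) with h | h <;> rw [h] <;> norm_num
  rw [hsgn, ← hTmdet, ← hBmdet, hdet1]
  rw [← mul_assoc]
  rw [hunit, one_mul]

/-! ### The sign of the unshuffle permutation -/

lemma uS_lt {f : Fin (2 * k) → Bool} (hS : (Sof k f).card = k) (hT : (Tof k f).card = k)
    {p : Fin (2 * k)} (h : (p : ℕ) < k) :
    uS k hS hT p = (Sof k f).orderEmbOfFin hS ⟨p, h⟩ := by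
  show ψ k hS hT (ρ k p) = _
  rw [show ρ k p = Sum.inl ⟨p, h⟩ from dif_pos h, psi_inl]

lemma uS_ge {f : Fin (2 * k) → Bool} (hS : (Sof k f).card = k) (hT : (Tof k f).card = k)
    {p : Fin (2 * k)} (h : ¬ ((p : ℕ) < k)) :
    uS k hS hT p = (Tof k f).orderEmbOfFin hT ⟨(p : ℕ) - k, by omega⟩ := by
  show ψ k hS hT (ρ k p) = _
  rw [show ρ k p = Sum.inr ⟨(p : ℕ) - k, by omega⟩ from dif_neg h, psi_inr]

lemma uS_mem_S {f : Fin (2 * k) → Bool} (hS : (Sof k f).card = k) (hT : (Tof k f).card = k)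
    {p : Fin (2 * k)} (h : (p : ℕ) < k) : f (uS k hS hT p) = true := by
  rw [uS_lt k hS hT h]
  exact (Finset.mem_filter.mp ((Sof k f).orderEmbOfFin_mem hS _)).2

lemma uS_mem_T {f : Fin (2 * k) → Bool} (hS : (Sof k f).card = k) (hT : (Tof k f).card = k)
    {p : Fin (2 * k)} (h : ¬ ((p : ℕ) < k)) : f (uS k hS hT p) = false := by
  rw [uS_ge k hS hT h]
  exact (Finset.mem_filter.mp ((Tof k f).orderEmbOfFin_mem hT _)).2

/-- the number of "descents" of the unshuffle. -/
def Nf (f : Fin (2 * k) → Bool) : ℕ :=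
  ∑ x ∈ Sof k f, ((Tof k f).filter (fun y => y < x)).card

lemma sign_uS {f : Fin (2 * k) → Bool} (hS : (Sof k f).card = k)
    (hT : (Tof k f).card = k) :
    ((Equiv.Perm.sign (uS k hS hT) : ℤ) : ℚ) = (-1 : ℚ) ^ (Nf k f) := by
  set u := uS k hS hT with hu
  set v0 : Fin (2 * k) → ℚ := fun r => ((r : ℕ) : ℚ) with hv0
  have hvdm : (Matrix.vandermonde v0).submatrix (⇑u) id
      = Matrix.vandermonde (fun p => v0 (u p)) := by
    ext i j
    simp [Matrix.vandermonde, Matrix.submatrix_apply]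
  set g : Fin (2 * k) × Fin (2 * k) → ℚ := fun p => v0 (u p.2) - v0 (u p.1) with hg
  have hkey : ∏ p ∈ Pr (2 * k), g p
      = ((Equiv.Perm.sign u : ℤ) : ℚ) * ∏ p ∈ Pr (2 * k), (v0 p.2 - v0 p.1) := by
    have h1 : ((Matrix.vandermonde v0).submatrix (⇑u) id).det
        = ((Equiv.Perm.sign u : ℤ) : ℚ) * (Matrix.vandermonde v0).det :=
      Matrix.det_permute u _
    rw [hvdm] at h1
    simp only [det_vandermonde_pr] at h1
    exact h1
  have hD : ∏ p ∈ Pr (2 * k), (v0 p.2 - v0 p.1) = Dk (2 * k) := rfl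
  -- split the left-hand side product
  have hsplit1 := Finset.prod_filter_mul_prod_filter_not (Pr (2 * k))
    (fun p => (p.2 : ℕ) < k) g
  have hsplit2 := Finset.prod_filter_mul_prod_filter_not
    ((Pr (2 * k)).filter (fun p => ¬ ((p.2 : ℕ) < k)))
    (fun p => k ≤ (p.1 : ℕ)) g
  -- the three pieces
  have ha : 0 < ∏ p ∈ (Pr (2 * k)).filter (fun p => (p.2 : ℕ) < k), g p := by
    apply Finset.prod_pos
    intro p hp
    simp only [Pr, Finset.mem_filter, Finset.mem_univ, true_and] at hp
    obtain ⟨h12, h2⟩ := hp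
    have h1 : (p.1 : ℕ) < k := lt_trans h12 h2
    rw [hg]
    simp only []
    rw [uS_lt k hS hT h1, uS_lt k hS hT h2]
    have hmono := ((Sof k f).orderEmbOfFin hS).strictMono
      (show (⟨p.1, h1⟩ : Fin k) < ⟨p.2, h2⟩ from h12)
    have : ((((Sof k f).orderEmbOfFin hS ⟨p.1, h1⟩ : Fin (2 * k)) : ℕ) : ℚ)
        < ((((Sof k f).orderEmbOfFin hS ⟨p.2, h2⟩ : Fin (2 * k)) : ℕ) : ℚ) := by
      exact_mod_cast hmono
    rw [hv0]
    simp only []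
    linarith
  have hb : 0 < ∏ p ∈ ((Pr (2 * k)).filter (fun p => ¬ ((p.2 : ℕ) < k))).filter
      (fun p => k ≤ (p.1 : ℕ)), g p := by
    apply Finset.prod_pos
    intro p hp
    simp only [Pr, Finset.mem_filter, Finset.mem_univ, true_and] at hp
    obtain ⟨⟨h12, h2⟩, h1⟩ := hp
    have h1' : ¬ ((p.1 : ℕ) < k) := by omega
    rw [hg]
    simp only []
    rw [uS_ge k hS hT h1', uS_ge k hS hT h2]
    have hlt : (⟨(p.1 : ℕ) - k, by omega⟩ : Fin k) < ⟨(p.2 : ℕ) - k, by omega⟩ := by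
      rw [Fin.mk_lt_mk]
      have : (p.1 : ℕ) < (p.2 : ℕ) := h12
      omega
    have hmono := ((Tof k f).orderEmbOfFin hT).strictMono hlt
    have : ((((Tof k f).orderEmbOfFin hT ⟨(p.1 : ℕ) - k, by omega⟩ : Fin (2 * k)) : ℕ) : ℚ)
        < ((((Tof k f).orderEmbOfFin hT ⟨(p.2 : ℕ) - k, by omega⟩ : Fin (2 * k)) : ℕ) : ℚ) := by
      exact_mod_cast hmono
    rw [hv0]
    simp only []
    linarith
  -- the mixed piece
  have hmixed : ∏ p ∈ ((Pr (2 * k)).filter (fun p => ¬ ((p.2 : ℕ) < k))).filter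
      (fun p => ¬ (k ≤ (p.1 : ℕ))), g p
      = ∏ q ∈ (Sof k f) ×ˢ (Tof k f), (v0 q.2 - v0 q.1) := by
    apply Finset.prod_nbij (fun p => (u p.1, u p.2))
    · intro p hp
      simp only [Pr, Finset.mem_filter, Finset.mem_univ, true_and] at hp
      obtain ⟨⟨h12, h2⟩, h1⟩ := hp
      push_neg at h1
      rw [Finset.mem_product]
      constructor
      · have := uS_mem_S k hS hT h1
        rw [Sof, Finset.mem_filter]
        exact ⟨Finset.mem_univ _, this⟩
      · have := uS_mem_T k hS hT h2
        rw [Tof, Finset.mem_filter]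
        exact ⟨Finset.mem_univ _, this⟩
    · intro p hp q hq hpq
      simp only [Prod.mk.injEq] at hpq
      exact Prod.ext (u.injective hpq.1) (u.injective hpq.2)
    · intro q hq
      simp only [Finset.mem_coe, Finset.coe_product, Set.mem_prod] at hq
      refine ⟨(u.symm q.1, u.symm q.2), ?_, ?_⟩
      · have h1 : (u.symm q.1 : ℕ) < k := by
          by_contra hcon
          have := uS_mem_T k hS hT hcon
          rw [Equiv.apply_symm_apply] at this
          have h2 := (Finset.mem_filter.mp (Finset.mem_coe.mp hq.1)).2
          rw [this] at h2
          exact absurd h2 (by simp)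
        have h2 : ¬ ((u.symm q.2 : ℕ) < k) := by
          intro hcon
          have := uS_mem_S k hS hT hcon
          rw [Equiv.apply_symm_apply] at this
          have h2 := (Finset.mem_filter.mp (Finset.mem_coe.mp hq.2)).2
          rw [this] at h2
          exact absurd h2 (by simp)
        simp only [Finset.mem_coe, Pr, Finset.mem_filter, Finset.mem_univ, true_and]
        refine ⟨⟨?_, by omega⟩, by omega⟩
        show u.symm q.1 < u.symm q.2
        rw [Fin.lt_def]
        omega
      · simp only [Equiv.apply_symm_apply]
    · intro p hp
      rfl
  -- rewrite the mixed product with signs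
  have habs : ∏ q ∈ (Sof k f) ×ˢ (Tof k f), (v0 q.2 - v0 q.1)
      = ((-1 : ℚ) ^ (Nf k f)) *
        ∏ q ∈ (Sof k f) ×ˢ (Tof k f), |v0 q.2 - v0 q.1| := by
    have hfac : ∀ q ∈ (Sof k f) ×ˢ (Tof k f),
        v0 q.2 - v0 q.1 = (if q.2 < q.1 then (-1 : ℚ) else 1) * |v0 q.2 - v0 q.1| := by
      intro q hq
      rw [Finset.mem_product] at hq
      have hne : q.1 ≠ q.2 := by
        intro hcon
        have h1 := (Finset.mem_filter.mp hq.1).2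
        have h2 := (Finset.mem_filter.mp hq.2).2
        rw [hcon, h2] at h1
        exact absurd h1 (by simp)
      rcases lt_or_gt_of_ne hne with hlt | hgt
      · have : v0 q.1 < v0 q.2 := by
          rw [hv0]; simp only []
          exact_mod_cast hlt
        rw [if_neg (by exact not_lt_of_gt hlt), one_mul, abs_of_pos (by linarith)]
      · have : v0 q.2 < v0 q.1 := by
          rw [hv0]; simp only []
          exact_mod_cast hgt
        rw [if_pos hgt, abs_of_neg (by linarith)]
        ring
    rw [Finset.prod_congr rfl hfac, Finset.prod_mul_distrib]
    congr 1
    rw [Finset.prod_product]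
    have hinner : ∀ x ∈ Sof k f, ∏ y ∈ Tof k f, (if y < x then (-1 : ℚ) else 1)
        = (-1 : ℚ) ^ ((Tof k f).filter (fun y => y < x)).card := by
      intro x _
      rw [← Finset.prod_filter_mul_prod_filter_not (Tof k f) (fun y => y < x)]
      rw [Finset.prod_congr rfl (fun y hy => if_pos (Finset.mem_filter.mp hy).2),
        Finset.prod_congr rfl (fun y hy => if_neg (Finset.mem_filter.mp hy).2),
        Finset.prod_const, Finset.prod_const, one_pow, mul_one]
    rw [Finset.prod_congr rfl hinner, Finset.prod_pow_eq_pow_sum]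
    rfl
  have hpos : 0 < ∏ q ∈ (Sof k f) ×ˢ (Tof k f), |v0 q.2 - v0 q.1| := by
    apply Finset.prod_pos
    intro q hq
    rw [Finset.mem_product] at hq
    have hne : q.1 ≠ q.2 := by
      intro hcon
      have h1 := (Finset.mem_filter.mp hq.1).2
      have h2 := (Finset.mem_filter.mp hq.2).2
      rw [hcon, h2] at h1
      exact absurd h1 (by simp)
    apply abs_pos.mpr
    intro hcon
    apply hne
    apply Fin.ext
    have : ((q.1 : ℕ) : ℚ) = ((q.2 : ℕ) : ℚ) := by
      rw [hv0] at hcon; simp only [] at hcon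
      linarith
    exact_mod_cast this
  -- put everything together
  rw [hmixed, habs] at hsplit2
  rw [← hsplit2] at hsplit1
  rw [hD] at hkey
  rw [← hsplit1] at hkey
  -- hkey : Pa * (Pb * ((-1)^Nf * Habs)) = sign * Dk
  set Pa := ∏ p ∈ (Pr (2 * k)).filter (fun p => (p.2 : ℕ) < k), g p
  set Pb := ∏ p ∈ ((Pr (2 * k)).filter (fun p => ¬ ((p.2 : ℕ) < k))).filter
      (fun p => k ≤ (p.1 : ℕ)), g p
  set Habs := ∏ q ∈ (Sof k f) ×ˢ (Tof k f), |v0 q.2 - v0 q.1|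
  have hDpos := Dk_pos (2 * k)
  rcases Int.units_eq_one_or (Equiv.Perm.sign u) with hsg | hsg <;>
    rcases Nat.even_or_odd (Nf k f) with hpar | hpar
  · rw [hsg, hpar.neg_one_pow]; norm_num
  · exfalso
    rw [hsg, hpar.neg_one_pow] at hkey
    push_cast at hkey
    nlinarith [mul_pos ha (mul_pos hb hpos), hDpos]
  · exfalso
    rw [hsg, hpar.neg_one_pow] at hkey
    push_cast at hkey
    nlinarith [mul_pos ha (mul_pos hb hpos), hDpos]
  · rw [hsg, hpar.neg_one_pow]; norm_num

/-! ### Parity of `Nf` -/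

lemma neg_one_pow_congr {a b : ℕ} (h : (a : ZMod 2) = (b : ZMod 2)) :
    (-1 : ℚ) ^ a = (-1 : ℚ) ^ b := by
  rw [ZMod.natCast_eq_natCast_iff'] at h
  rcases Nat.even_or_odd a with hpar | hpar
  · have hb : Even b := by
      rw [Nat.even_iff] at hpar ⊢
      omega
    rw [hpar.neg_one_pow, hb.neg_one_pow]
  · have hb : Odd b := by
      rw [Nat.odd_iff] at hpar ⊢
      omega
    rw [hpar.neg_one_pow, hb.neg_one_pow]

lemma sum_filter_lt_choose {α : Type*} [LinearOrder α] (S : Finset α) :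
    ∑ x ∈ S, (S.filter (fun y => y < x)).card = S.card.choose 2 := by
  classical
  induction S using Finset.induction_on_max with
  | empty => simp
  | insert a S ha ih =>
    have hanotmem : a ∉ S := fun hmem => absurd (ha a hmem) (lt_irrefl a)
    rw [Finset.sum_insert hanotmem]
    have h1 : (insert a S).filter (fun y => y < a) = S := by
      ext x
      simp only [Finset.mem_filter, Finset.mem_insert]
      constructor
      · rintro ⟨hx | hx, hlt⟩
        · exact absurd hlt (by rw [hx]; exact lt_irrefl a)
        · exact hx
      · intro hx
        exact ⟨Or.inr hx, ha x hx⟩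
    have h2 : ∀ x ∈ S, ((insert a S).filter (fun y => y < x)).card
        = (S.filter (fun y => y < x)).card := by
      intro x hx
      congr 1
      ext y
      simp only [Finset.mem_filter, Finset.mem_insert]
      constructor
      · rintro ⟨hy | hy, hlt⟩
        · exfalso
          rw [hy] at hlt
          exact absurd (lt_trans hlt (ha x hx)) (lt_irrefl a)
        · exact ⟨hy, hlt⟩
      · rintro ⟨hy, hlt⟩
        exact ⟨Or.inr hy, hlt⟩
    rw [h1, Finset.sum_congr rfl h2, ih, Finset.card_insert_of_notMem hanotmem]
    have h5 : (S.card + 1).choose 2 = S.card.choose 1 + S.card.choose 2 := by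
      rw [show (2 : ℕ) = 1 + 1 from rfl, Nat.choose_succ_succ']
    rw [Nat.choose_one_right] at h5
    omega

lemma card_filter_lt_fin {x : Fin (2 * k)} :
    (Finset.univ.filter (fun y : Fin (2 * k) => y < x)).card = (x : ℕ) := by
  have h : Finset.univ.filter (fun y : Fin (2 * k) => y < x) = Finset.Iio x := by
    ext y
    simp [Finset.mem_Iio]
  rw [h, Fin.card_Iio]

lemma Nf_add {f : Fin (2 * k) → Bool} :
    Nf k f + ∑ x ∈ Sof k f, ((Sof k f).filter (fun y => y < x)).card
      = ∑ x ∈ Sof k f, (x : ℕ) := by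
  rw [Nf, ← Finset.sum_add_distrib]
  apply Finset.sum_congr rfl
  intro x _
  have h1 := Finset.card_filter_add_card_filter_not
    (s := Finset.univ.filter (fun y : Fin (2 * k) => y < x)) (fun c => f c = true)
  have h2 : (Finset.univ.filter (fun y : Fin (2 * k) => y < x)).filter (fun c => f c = true)
      = (Sof k f).filter (fun y => y < x) := by
    rw [Sof, Finset.filter_filter, Finset.filter_filter]
    apply Finset.filter_congr
    intro c _
    exact ⟨fun ⟨p, q⟩ => ⟨q, p⟩, fun ⟨p, q⟩ => ⟨q, p⟩⟩
  have h3 : (Finset.univ.filter (fun y : Fin (2 * k) => y < x)).filter (fun c => ¬ (f c = true))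
      = (Tof k f).filter (fun y => y < x) := by
    rw [Tof, Finset.filter_filter, Finset.filter_filter]
    apply Finset.filter_congr
    intro c _
    constructor
    · rintro ⟨p, q⟩
      exact ⟨by simpa using q, p⟩
    · rintro ⟨p, q⟩
      exact ⟨q, by simp [p]⟩
  rw [h2, h3, card_filter_lt_fin] at h1
  omega

/-- the fixed odd-index part determined by `As`. -/
def FixAs : Finset (Fin (2 * k)) :=
  Finset.univ.filter (fun c => Odd (c : ℕ) ∧ (c : ℕ) + 1 ∈ As)

lemma Sof_filter_odd {f : Fin (2 * k) → Bool} (hcompat : Compat k As f) :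
    (Sof k f).filter (fun c : Fin (2 * k) => Odd (c : ℕ)) = FixAs k As := by
  ext c
  simp only [Sof, FixAs, Finset.mem_filter, Finset.mem_univ, true_and]
  constructor
  · rintro ⟨hf, hodd⟩
    refine ⟨hodd, ?_⟩
    have he : Even ((c : ℕ) + 1) := by
      rcases hodd with ⟨m, hm⟩
      exact ⟨m + 1, by omega⟩
    exact (hcompat c he).mp hf
  · rintro ⟨hodd, hmem⟩
    have he : Even ((c : ℕ) + 1) := by
      rcases hodd with ⟨m, hm⟩
      exact ⟨m + 1, by omega⟩
    exact ⟨(hcompat c he).mpr hmem, hodd⟩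

lemma Nf_parity {f : Fin (2 * k) → Bool} (hcompat : Compat k As f)
    (hS : (Sof k f).card = k) :
    (Nf k f : ZMod 2) = ((FixAs k As).card : ZMod 2) + (k.choose 2 : ZMod 2) := by
  have h1 := Nf_add k (f := f)
  have h2 : (((Nf k f) : ℕ) : ZMod 2) + ((∑ x ∈ Sof k f,
      ((Sof k f).filter (fun y => y < x)).card : ℕ) : ZMod 2)
      = ((∑ x ∈ Sof k f, (x : ℕ) : ℕ) : ZMod 2) := by
    rw [← Nat.cast_add, h1]
  have h3 : ((∑ x ∈ Sof k f, ((Sof k f).filter (fun y => y < x)).card : ℕ) : ZMod 2)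
      = (k.choose 2 : ZMod 2) := by
    rw [sum_filter_lt_choose, hS]
  have h4 : ((∑ x ∈ Sof k f, (x : ℕ) : ℕ) : ZMod 2) = ((FixAs k As).card : ZMod 2) := by
    rw [Nat.cast_sum]
    rw [← Finset.sum_filter_add_sum_filter_not (Sof k f) (fun c : Fin (2 * k) => Odd (c : ℕ))]
    have hz : ∑ x ∈ (Sof k f).filter (fun c : Fin (2 * k) => ¬ Odd (c : ℕ)),
        ((x : ℕ) : ZMod 2) = 0 := by
      apply Finset.sum_eq_zero
      intro x hx
      have hev := (Finset.mem_filter.mp hx).2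
      rw [Nat.not_odd_iff_even, Nat.even_iff] at hev
      rw [ZMod.natCast_eq_zero_iff]
      omega
    have ho : ∑ x ∈ (Sof k f).filter (fun c : Fin (2 * k) => Odd (c : ℕ)), ((x : ℕ) : ZMod 2)
        = (((Sof k f).filter (fun c : Fin (2 * k) => Odd (c : ℕ))).card : ZMod 2) := by
      have hone : ∀ x ∈ (Sof k f).filter (fun c : Fin (2 * k) => Odd (c : ℕ)),
          ((x : ℕ) : ZMod 2) = 1 := by
        intro x hx
        have hodd := (Finset.mem_filter.mp hx).2
        rw [Nat.odd_iff] at hodd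
        rw [← ZMod.natCast_mod, hodd, Nat.cast_one]
      rw [Finset.sum_congr rfl hone, Finset.sum_const, nsmul_eq_mul, mul_one]
    rw [hz, add_zero, ho, Sof_filter_odd k As hcompat]
  rw [h3, h4] at h2
  -- h2 : Nf + choose = Fix
  have := congrArg (fun z => z + (k.choose 2 : ZMod 2)) h2
  rw [add_assoc, CharTwo.add_self_eq_zero, add_zero] at this
  exact this

/-! ### The value of `det Zsq`, squared -/

/-- odd-columns Vandermonde block. -/
def Pm : Matrix (Fin k) (Fin k) ℚ := fun s i => ((2 * (i : ℕ) + 1 : ℕ) : ℚ) ^ (s : ℕ)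

/-- even-columns Vandermonde block. -/
def Pem : Matrix (Fin k) (Fin k) ℚ := fun s i => ((2 * (i : ℕ) + 2 : ℕ) : ℚ) ^ (s : ℕ)

/-- top-right block. -/
def Qm : Matrix (Fin k) (Fin k) ℚ := fun s i =>
  (if 2 * (i : ℕ) + 2 ∈ As then (1 : ℚ) else 0) * ((2 * (i : ℕ) + 2 : ℕ) : ℚ) ^ (s : ℕ)

/-- bottom-right block. -/
def Sm : Matrix (Fin k) (Fin k) ℚ := fun s i =>
  (if 2 * (i : ℕ) + 2 ∈ As then (0 : ℚ) else 1) * ((2 * (i : ℕ) + 2 : ℕ) : ℚ) ^ (s : ℕ)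

/-- the matrix `Zsq` after sorting columns by parity. -/
def Ym : Matrix (Fin k ⊕ Fin k) (Fin k ⊕ Fin k) ℚ :=
  Matrix.fromBlocks (Pm k) (Qm k As) (Pm k) (Sm k As)

lemma Ym_eq : (Zsq k As).submatrix (⇑(ρ k).symm) (⇑(κ k)) = Ym k As := by
  ext r c
  have hrow : ∀ x : Fin k ⊕ Fin k, ρ k ((ρ k).symm x) = x := fun x =>
    (ρ k).apply_symm_apply x
  rcases r with s | s <;> rcases c with i | i
  · show part k As true (κ k (Sum.inl i)) (ρ k ((ρ k).symm (Sum.inl s)))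
      + part k As false (κ k (Sum.inl i)) (ρ k ((ρ k).symm (Sum.inl s))) = Pm k s i
    rw [hrow]
    have hv : ((κ k (Sum.inl i) : ℕ)) = 2 * (i : ℕ) := rfl
    have hodd : ¬ Even ((κ k (Sum.inl i) : ℕ) + 1) := by
      rw [hv, Nat.even_add_one]
      simp [Nat.even_iff]
    simp [part, wTop, hodd, Pm, hv]
  · show part k As true (κ k (Sum.inr i)) (ρ k ((ρ k).symm (Sum.inl s)))
      + part k As false (κ k (Sum.inr i)) (ρ k ((ρ k).symm (Sum.inl s))) = Qm k As s i
    rw [hrow]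
    have hv : ((κ k (Sum.inr i) : ℕ)) = 2 * (i : ℕ) + 1 := rfl
    have heven : Even ((κ k (Sum.inr i) : ℕ) + 1) := by
      rw [hv]
      exact ⟨(i : ℕ) + 1, by ring⟩
    simp only [part, wTop, if_pos heven, if_true, if_false]
    rw [Qm]
    simp only [hv]
    norm_num [show 2 * (i:ℕ) + 1 + 1 = 2 * (i:ℕ) + 2 from rfl]
  · show part k As true (κ k (Sum.inl i)) (ρ k ((ρ k).symm (Sum.inr s)))
      + part k As false (κ k (Sum.inl i)) (ρ k ((ρ k).symm (Sum.inr s))) = Pm k s i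
    rw [hrow]
    have hv : ((κ k (Sum.inl i) : ℕ)) = 2 * (i : ℕ) := rfl
    have hodd : ¬ Even ((κ k (Sum.inl i) : ℕ) + 1) := by
      rw [hv, Nat.even_add_one]
      simp [Nat.even_iff]
    simp [part, wBot, hodd, Pm, hv]
  · show part k As true (κ k (Sum.inr i)) (ρ k ((ρ k).symm (Sum.inr s)))
      + part k As false (κ k (Sum.inr i)) (ρ k ((ρ k).symm (Sum.inr s))) = Sm k As s i
    rw [hrow]
    have hv : ((κ k (Sum.inr i) : ℕ)) = 2 * (i : ℕ) + 1 := rfl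
    have heven : Even ((κ k (Sum.inr i) : ℕ) + 1) := by
      rw [hv]
      exact ⟨(i : ℕ) + 1, by ring⟩
    simp only [part, wBot, if_pos heven, if_true, if_false]
    rw [Sm]
    simp only [hv]
    norm_num [show 2 * (i:ℕ) + 1 + 1 = 2 * (i:ℕ) + 2 from rfl]

lemma det_Pm : (Pm k).det = 2 ^ (Pr k).card * Dk k := by
  have h1 : Pm k = (Matrix.vandermonde (fun i : Fin k => ((2 * (i : ℕ) + 1 : ℕ) : ℚ)))ᵀ := by
    ext s i
    simp [Matrix.vandermonde, Matrix.transpose_apply, Pm]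
  rw [h1, Matrix.det_transpose, det_vandermonde_pr]
  have h2 : ∀ p ∈ Pr k, (((2 * ((p.2 : Fin k) : ℕ) + 1 : ℕ) : ℚ)
      - ((2 * ((p.1 : Fin k) : ℕ) + 1 : ℕ) : ℚ))
      = 2 * ((((p.2 : Fin k) : ℕ) : ℚ) - (((p.1 : Fin k) : ℕ) : ℚ)) := by
    intro p _
    push_cast
    ring
  rw [Finset.prod_congr rfl h2, Finset.prod_mul_distrib, Finset.prod_const]
  rfl

lemma det_Pem : (Pem k).det = 2 ^ (Pr k).card * Dk k := by
  have h1 : Pem k = (Matrix.vandermonde (fun i : Fin k => ((2 * (i : ℕ) + 2 : ℕ) : ℚ)))ᵀ := by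
    ext s i
    simp [Matrix.vandermonde, Matrix.transpose_apply, Pem]
  rw [h1, Matrix.det_transpose, det_vandermonde_pr]
  have h2 : ∀ p ∈ Pr k, (((2 * ((p.2 : Fin k) : ℕ) + 2 : ℕ) : ℚ)
      - ((2 * ((p.1 : Fin k) : ℕ) + 2 : ℕ) : ℚ))
      = 2 * ((((p.2 : Fin k) : ℕ) : ℚ) - (((p.1 : Fin k) : ℕ) : ℚ)) := by
    intro p _
    push_cast
    ring
  rw [Finset.prod_congr rfl h2, Finset.prod_mul_distrib, Finset.prod_const]
  rfl

lemma det_Ym_sq : ((Ym k As).det) ^ 2 = (2 ^ (Pr k).card * Dk k) ^ 4 := by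
  set L : Matrix (Fin k ⊕ Fin k) (Fin k ⊕ Fin k) ℚ :=
    Matrix.fromBlocks 1 0 (-1) 1 with hL
  have hdetL : L.det = 1 := by
    rw [hL, Matrix.det_fromBlocks_zero₁₂]
    simp
  have hLY : L * Ym k As = Matrix.fromBlocks (Pm k) (Qm k As) 0 (Sm k As - Qm k As) := by
    rw [hL, Ym, Matrix.fromBlocks_multiply]
    rw [Matrix.one_mul, Matrix.one_mul, Matrix.zero_mul, Matrix.zero_mul, add_zero, add_zero,
      neg_one_mul, neg_one_mul, neg_add_cancel, neg_add_eq_sub, Matrix.one_mul]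
  have hdetY : (Ym k As).det = (Pm k).det * (Sm k As - Qm k As).det := by
    have h1 : (Ym k As).det = (L * Ym k As).det := by
      rw [Matrix.det_mul, hdetL, one_mul]
    rw [h1, hLY, Matrix.det_fromBlocks_zero₂₁]
  have hSQ : Sm k As - Qm k As = Matrix.of fun (i j : Fin k) =>
      (if 2 * (j : ℕ) + 2 ∈ As then (-1 : ℚ) else 1) * Pem k i j := by
    ext i j
    simp only [Matrix.sub_apply, Matrix.of_apply, Sm, Qm, Pem]
    by_cases h : 2 * (j : ℕ) + 2 ∈ As <;> simp [h] <;> ring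
  have hdetSQ : (Sm k As - Qm k As).det =
      (∏ i : Fin k, (if 2 * (i : ℕ) + 2 ∈ As then (-1 : ℚ) else 1)) * (Pem k).det := by
    rw [hSQ]
    exact Matrix.det_mul_row
      (fun i : Fin k => (if 2 * (i : ℕ) + 2 ∈ As then (-1 : ℚ) else 1)) (Pem k)
  have hsq1 : (∏ i : Fin k, (if 2 * (i : ℕ) + 2 ∈ As then (-1 : ℚ) else 1)) ^ 2 = 1 := by
    rw [← Finset.prod_pow]
    apply Finset.prod_eq_one
    intro i _
    by_cases h : 2 * (i : ℕ) + 2 ∈ As <;> simp [h]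
  rw [hdetY, hdetSQ, det_Pm, det_Pem]
  calc ((2 ^ (Pr k).card * Dk k) *
        ((∏ i : Fin k, (if 2 * (i : ℕ) + 2 ∈ As then (-1 : ℚ) else 1))
          * (2 ^ (Pr k).card * Dk k))) ^ 2
      = ((∏ i : Fin k, (if 2 * (i : ℕ) + 2 ∈ As then (-1 : ℚ) else 1)) ^ 2)
        * (2 ^ (Pr k).card * Dk k) ^ 4 := by ring
    _ = (2 ^ (Pr k).card * Dk k) ^ 4 := by rw [hsq1, one_mul]

/-! ### Putting it all together -/

lemma det_Zsq_sq : ((Zsq k As).det) ^ 2 = (2 ^ (Pr k).card * Dk k) ^ 4 := by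
  set σκ : Equiv.Perm (Fin k ⊕ Fin k) := (κ k).trans (ρ k) with hσκ
  have h1 : (Zsq k As).submatrix (⇑(ρ k).symm) (⇑(κ k))
      = ((Zsq k As).submatrix (⇑(ρ k).symm) (⇑(ρ k).symm)).submatrix id (⇑σκ) := by
    ext r c
    simp [Matrix.submatrix_apply, hσκ, Equiv.symm_apply_apply]
  have h2 : (Ym k As).det = ((Equiv.Perm.sign σκ : ℤ) : ℚ) * (Zsq k As).det := by
    rw [← Ym_eq, h1, Matrix.det_permute', Matrix.det_submatrix_equiv_self]
  have h3 : (((Equiv.Perm.sign σκ : ℤ) : ℚ)) ^ 2 = 1 := by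
    rcases Int.units_eq_one_or (Equiv.Perm.sign σκ) with h | h <;> rw [h] <;> norm_num
  have h4 := det_Ym_sq k As
  rw [h2, mul_pow, h3, one_mul] at h4
  exact h4

lemma det_Zsq_good_sum (hk : 0 < k) :
    (Zsq k As).det = ∑ f ∈ goodF k As, (Zf k As f).det := by
  rw [det_Zsq_expand]
  symm
  apply Finset.sum_subset (Finset.subset_univ _)
  intro f _ hnot
  rw [goodF, Finset.mem_filter] at hnot
  by_cases hc : Compat k As f
  · apply det_Zf_zero_of_card k As hk f
    intro hcard
    exact hnot ⟨Finset.mem_univ f, hc, hcard⟩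
  · exact det_Zf_zero_of_incompat k As f hc

lemma det_Zf_good_val {f : Fin (2 * k) → Bool} (hf : f ∈ goodF k As) :
    (Zf k As f).det = ((-1 : ℚ) ^ ((FixAs k As).card + Nat.choose k 2)) *
      ((wt k (Aof k f) * wt k (Bof k f)) * (Dk k) ^ 2) := by
  obtain ⟨-, hcompat, hS⟩ := Finset.mem_filter.mp hf
  have hS' : (Sof k f).card = k := hS
  have hT := Tof_card k hS'
  rw [det_Zf_good k As hcompat hS' hT, sign_uS k hS' hT]
  have hpar : (Nf k f : ZMod 2) = (((FixAs k As).card + Nat.choose k 2 : ℕ) : ZMod 2) := by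
    rw [Nat.cast_add]
    exact Nf_parity k As hcompat hS'
  rw [neg_one_pow_congr hpar]
  ring

lemma Bof_eq_sdiff {f : Fin (2 * k) → Bool} :
    Bof k f = Finset.Icc 1 (2 * k) \ Aof k f := by
  ext x
  simp only [Bof, Aof, Tof, Sof, Finset.mem_map, Finset.mem_filter, Finset.mem_univ, true_and,
    Finset.mem_sdiff, Finset.mem_Icc, emb2, Function.Embedding.coeFn_mk]
  constructor
  · rintro ⟨c, hfc, rfl⟩
    refine ⟨⟨by omega, by omega⟩, ?_⟩
    rintro ⟨c', hfc', hcc⟩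
    have : c' = c := by
      apply Fin.ext
      omega
    rw [this, hfc] at hfc'
    exact absurd hfc' (by simp)
  · rintro ⟨⟨hx1, hx2⟩, hnot⟩
    refine ⟨⟨x - 1, by omega⟩, ?_, by simp; omega⟩
    cases hfc : f ⟨x - 1, by omega⟩
    · rfl
    · exfalso
      exact hnot ⟨⟨x - 1, by omega⟩, hfc, by simp; omega⟩

end BalancedAux

open BalancedAux in
theorem sum_wt_mul_wt_fixed_evens (k : ℕ) (hk : 0 < k) (Astar : Finset ℕ)
    (hAstar : Astar ⊆ (Finset.Icc 1 (2 * k)).filter (fun x => Even x)) :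
    ∑ A ∈ (Finset.Icc 1 (2 * k)).powerset.filter
        (fun A => A.card = k ∧
          A ∩ ((Finset.Icc 1 (2 * k)).filter (fun x => Even x)) = Astar),
      wt k A * wt k (Finset.Icc 1 (2 * k) \ A) = 2 ^ (k * (k - 1)) := by
  classical
  set idx := (Finset.Icc 1 (2 * k)).powerset.filter
      (fun A => A.card = k ∧
        A ∩ ((Finset.Icc 1 (2 * k)).filter (fun x => Even x)) = Astar) with hidx
  set W := ∑ A ∈ idx, wt k A * wt k (Finset.Icc 1 (2 * k) \ A) with hW
  -- step 1 : the bijection between good choice functions and admissible sets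
  have hbij : ∑ f ∈ goodF k Astar, (wt k (Aof k f) * wt k (Bof k f)) = W := by
    apply Finset.sum_nbij' (i := fun f => Aof k f)
      (j := fun A => (fun c : Fin (2 * k) => decide ((c : ℕ) + 1 ∈ A)))
    · -- i maps goodF into idx
      intro f hf
      obtain ⟨-, hcompat, hS⟩ := Finset.mem_filter.mp hf
      have hS' : (Sof k f).card = k := hS
      rw [hidx, Finset.mem_filter, Finset.mem_powerset]
      refine ⟨?_, Aof_card k hS', ?_⟩
      · intro x hx
        simp only [Aof, Sof, Finset.mem_map, emb2, Function.Embedding.coeFn_mk] at hx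
        obtain ⟨c, -, rfl⟩ := hx
        rw [Finset.mem_Icc]
        omega
      · ext x
        simp only [Finset.mem_inter, Finset.mem_filter, Finset.mem_Icc]
        constructor
        · rintro ⟨hxA, -, hxe⟩
          simp only [Aof, Sof, Finset.mem_map, Finset.mem_filter, Finset.mem_univ, true_and,
            emb2, Function.Embedding.coeFn_mk] at hxA
          obtain ⟨c, hfc, rfl⟩ := hxA
          exact (hcompat c hxe).mp hfc
        · intro hx
          have hxmem := hAstar hx
          rw [Finset.mem_filter, Finset.mem_Icc] at hxmem
          obtain ⟨⟨hx1, hx2⟩, hxe⟩ := hxmem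
          set c : Fin (2 * k) := ⟨x - 1, by omega⟩ with hc
          have hcx : (c : ℕ) + 1 = x := by
            show x - 1 + 1 = x
            omega
          refine ⟨?_, ⟨hx1, hx2⟩, hxe⟩
          simp only [Aof, Sof, Finset.mem_map, Finset.mem_filter, Finset.mem_univ, true_and,
            emb2, Function.Embedding.coeFn_mk]
          refine ⟨c, ?_, hcx⟩
          apply (hcompat c (by rw [hcx]; exact hxe)).mpr
          rw [hcx]
          exact hx
    · -- j maps idx into goodF
      intro A hA
      rw [hidx, Finset.mem_filter, Finset.mem_powerset] at hA
      obtain ⟨hsub, hcard, hinter⟩ := hA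
      rw [goodF, Finset.mem_filter]
      refine ⟨Finset.mem_univ _, ?_, ?_⟩
      · intro c hce
        rw [decide_eq_true_eq]
        constructor
        · intro hmem
          rw [← hinter, Finset.mem_inter, Finset.mem_filter, Finset.mem_Icc]
          exact ⟨hmem, ⟨by omega, by omega⟩, hce⟩
        · intro hmem
          rw [← hinter, Finset.mem_inter] at hmem
          exact hmem.1
      · refine Eq.trans (Finset.card_nbij (fun c : Fin (2 * k) => (c : ℕ) + 1) ?_ ?_ ?_) hcard
        · intro c hcmem
          simp only [Finset.mem_coe, Finset.mem_filter, Finset.mem_univ, true_and,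
            decide_eq_true_eq] at hcmem
          exact hcmem
        · intro a ha b hb hab
          apply Fin.ext
          have h2 : (a : ℕ) + 1 = (b : ℕ) + 1 := hab
          omega
        · intro x hx
          rw [Finset.mem_coe] at hx
          have hxmem := hsub hx
          rw [Finset.mem_Icc] at hxmem
          refine ⟨⟨x - 1, by omega⟩, ?_, by simp; omega⟩
          simp only [Finset.mem_coe, Finset.mem_filter, Finset.mem_univ, true_and,
            decide_eq_true_eq]
          have : (x - 1) + 1 = x := by omega
          simpa [this] using hx
    · -- left inverse
      intro f hf
      funext c
      have hmem : ((c : ℕ) + 1 ∈ Aof k f) = (f c = true) := by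
        apply propext
        simp only [Aof, Sof, Finset.mem_map, Finset.mem_filter, Finset.mem_univ, true_and,
          emb2, Function.Embedding.coeFn_mk]
        constructor
        · rintro ⟨c', hfc', hcc⟩
          have : c' = c := by
            apply Fin.ext
            omega
          rwa [this] at hfc'
        · intro hfc
          exact ⟨c, hfc, rfl⟩
      cases hfc : f c
      · have hn : ¬ ((c : ℕ) + 1 ∈ Aof k f) := by
          rw [hmem, hfc]
          simp
        simp [hn]
      · have hy : (c : ℕ) + 1 ∈ Aof k f := by
          rw [hmem]
          exact hfc
        simp [hy]
    · -- right inverse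
      intro A hA
      rw [hidx, Finset.mem_filter, Finset.mem_powerset] at hA
      obtain ⟨hsub, -, -⟩ := hA
      ext x
      simp only [Aof, Sof, Finset.mem_map, Finset.mem_filter, Finset.mem_univ, true_and,
        emb2, Function.Embedding.coeFn_mk, decide_eq_true_eq]
      constructor
      · rintro ⟨c, hmem, rfl⟩
        exact hmem
      · intro hx
        have hxmem := hsub hx
        rw [Finset.mem_Icc] at hxmem
        refine ⟨⟨x - 1, by omega⟩, ?_, by simp; omega⟩
        have : (x - 1) + 1 = x := by omega
        simpa [this] using hx
    · -- values agree
      intro f hf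
      rw [Bof_eq_sdiff]
  -- step 2 : determinant evaluation
  have hdet : (Zsq k Astar).det = ((-1 : ℚ) ^ ((FixAs k Astar).card + Nat.choose k 2)) *
      (W * (Dk k) ^ 2) := by
    rw [det_Zsq_good_sum k Astar hk]
    rw [Finset.sum_congr rfl (fun f hf => det_Zf_good_val k Astar hf)]
    rw [← Finset.mul_sum, ← Finset.sum_mul, hbij]
  -- step 3 : squares
  have hsq := det_Zsq_sq k Astar
  rw [hdet, mul_pow, mul_pow] at hsq
  have hsgn : ((-1 : ℚ) ^ ((FixAs k Astar).card + Nat.choose k 2)) ^ 2 = 1 := by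
    rw [← pow_mul, mul_comm, pow_mul]
    norm_num
  rw [hsgn, one_mul] at hsq
  have hDk := Dk_pos k
  have hW2 : W ^ 2 = ((2 : ℚ) ^ (k * (k - 1))) ^ 2 := by
    have hexp : ((2 : ℚ) ^ (Pr k).card) ^ 4 = ((2 : ℚ) ^ (k * (k - 1))) ^ 2 := by
      rw [← pow_mul, ← pow_mul, ← card_pr_two k]
      ring_nf
    have h4 : (2 ^ (Pr k).card * Dk k) ^ 4 = ((2 : ℚ) ^ (k * (k - 1))) ^ 2 * (Dk k) ^ 4 := by
      rw [mul_pow, hexp]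
    rw [h4] at hsq
    have hDk4 : (Dk k) ^ 4 ≠ 0 := by positivity
    have : W ^ 2 * (Dk k) ^ 4 = ((2 : ℚ) ^ (k * (k - 1))) ^ 2 * (Dk k) ^ 4 := by
      rw [← hsq]
      ring
    exact mul_right_cancel₀ hDk4 this
  -- step 4 : positivity
  have hWnonneg : 0 ≤ W := by
    rw [hW]
    apply Finset.sum_nonneg
    intro A hA
    rw [hidx, Finset.mem_filter, Finset.mem_powerset] at hA
    obtain ⟨hsub, hcard, -⟩ := hA
    have hBcard : (Finset.Icc 1 (2 * k) \ A).card = k := by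
      rw [Finset.card_sdiff_of_subset hsub, Nat.card_Icc, hcard]
      omega
    exact le_of_lt (mul_pos (wt_pos hcard) (wt_pos hBcard))
  have hcpos : (0 : ℚ) < 2 ^ (k * (k - 1)) := by positivity
  have hfactor : (W - 2 ^ (k * (k - 1))) * (W + 2 ^ (k * (k - 1))) = 0 := by
    have : W ^ 2 - ((2 : ℚ) ^ (k * (k - 1))) ^ 2 = 0 := by
      rw [hW2]
      ring
    calc (W - 2 ^ (k * (k - 1))) * (W + 2 ^ (k * (k - 1)))
        = W ^ 2 - ((2 : ℚ) ^ (k * (k - 1))) ^ 2 := by ring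
      _ = 0 := this
  rcases mul_eq_zero.mp hfactor with h | h
  · linarith [sub_eq_zero.mp h]
  · linarith
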